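/- Let k be an algebraically closed field of characteristic zero, G a finite group, and z : G × G → kˣ a normalized 2-cocycle with trivial action, i.e. z(g₂,g₃) · z(g₁,g₂g₃) = z(g₁g₂,g₃) · z(g₁,g₂) for all g₁,g₂,g₃ ∈ G and z(g,e) = z(e,g) = 1 for all g ∈ G. Let A be an associative unital k-algebra equipped with a k-basis (e_g)_{g∈G} indexed by G such that e_g · e_{g'} = z(g,g') · e_{g g'} for all g, g' ∈ G (a twisted group algebra k[G]_z). Then the dimension over k of the center Z(A) of A equals the number of z-regular conjugacy classes of G. -/

import Mathlib

lemma tga_cocycle_key {k G : Type*} [Field k] [Group G] (z : G → G → kˣ)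
    (hz : ∀ g₁ g₂ g₃ : G, z g₂ g₃ * z g₁ (g₂ * g₃) = z (g₁ * g₂) g₃ * z g₁ g₂)
    (r h₁ h₂ g g' : G) (hg : g = h₁⁻¹ * r * h₁) (hg' : g' = h₂⁻¹ * g * h₂) :
    (z r h₁ : k) * (z g h₂ : k) * (z (h₁ * h₂) g' : k)
      = (z r (h₁ * h₂) : k) * (z h₂ g' : k) * (z h₁ g : k) := by
  have e1 := congrArg (Units.val : kˣ → k) (hz r h₁ h₂)
  have e2 := congrArg (Units.val : kˣ → k) (hz h₁ g h₂)
  have e3 := congrArg (Units.val : kˣ → k) (hz h₁ h₂ g')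
  have hmul1 : h₁ * g = r * h₁ := by rw [hg]; group
  have hmul2 : g * h₂ = h₂ * g' := by rw [hg']; group
  rw [hmul1, hmul2] at e2
  simp only [Units.val_mul] at e1 e2 e3
  have hq : (z h₁ (h₂ * g') : k) ≠ 0 := Units.ne_zero _
  apply mul_right_cancel₀ hq
  linear_combination ((z r h₁ : k) * (z (h₁ * h₂) g' : k)) * e2
    - ((z h₁ g : k) * (z (h₁ * h₂) g' : k)) * e1
    - ((z h₁ g : k) * (z r (h₁ * h₂) : k)) * e3

/-- transfer relation for `F r h = z r h / z h (h⁻¹ r h)`. -/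
lemma tga_F_transfer {k G : Type*} [Field k] [Group G] (z : G → G → kˣ)
    (hz : ∀ g₁ g₂ g₃ : G, z g₂ g₃ * z g₁ (g₂ * g₃) = z (g₁ * g₂) g₃ * z g₁ g₂)
    (r h₁ h₂ g g' : G) (hg : g = h₁⁻¹ * r * h₁) (hg' : g' = h₂⁻¹ * g * h₂) :
    ((z r h₁ : k) * (z h₁ g : k)⁻¹) * (z g h₂ : k)
      = ((z r (h₁ * h₂) : k) * (z (h₁ * h₂) g' : k)⁻¹) * (z h₂ g' : k) := by
  have key := tga_cocycle_key z hz r h₁ h₂ g g' hg hg'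
  have h1 : (z h₁ g : k) ≠ 0 := Units.ne_zero _
  have h2 : (z (h₁ * h₂) g' : k) ≠ 0 := Units.ne_zero _
  field_simp
  linear_combination key

/-- well-definedness of `F` on a `z`-regular class. -/
lemma tga_F_welldef {k G : Type*} [Field k] [Group G] (z : G → G → kˣ)
    (hz : ∀ g₁ g₂ g₃ : G, z g₂ g₃ * z g₁ (g₂ * g₃) = z (g₁ * g₂) g₃ * z g₁ g₂)
    (r h₁ h₂ g : G) (hg : g = h₁⁻¹ * r * h₁) (hg2 : g = h₂⁻¹ * r * h₂)
    (hreg : ∀ s : G, s * g = g * s → z g s = z s g) :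
    (z r h₁ : k) * (z h₁ g : k)⁻¹ = (z r h₂ : k) * (z h₂ g : k)⁻¹ := by
  have hw : (h₁⁻¹ * h₂)⁻¹ * g * (h₁⁻¹ * h₂) = g := by
    conv_lhs => rw [hg]
    conv_rhs => rw [hg2]
    group
  have hcomm : (h₁⁻¹ * h₂) * g = g * (h₁⁻¹ * h₂) := by
    conv_lhs => rw [hg2]
    conv_rhs => rw [hg]
    group
  have htr := tga_F_transfer z hz r h₁ (h₁⁻¹ * h₂) g g hg hw.symm
  rw [mul_inv_cancel_left] at htr
  have hregk : (z g (h₁⁻¹ * h₂) : k) = (z (h₁⁻¹ * h₂) g : k) := by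
    rw [hreg _ hcomm]
  rw [hregk] at htr
  exact mul_right_cancel₀ (Units.ne_zero _) htr

section TGA

variable {k G A : Type*} [Field k] [Group G] [Fintype G] [Ring A] [Algebra k A]
  (z : G → G → kˣ) (e : Module.Basis G k A)
  (he : ∀ g g' : G, e g * e g' = (z g g' : k) • e (g * g'))

include he

lemma tga_repr_mul_right (x : A) (h m : G) :
    e.repr (x * e h) m = e.repr x (m * h⁻¹) * (z (m * h⁻¹) h : k) := by
  have hx : x * e h = ∑ m : G, (e.repr x (m * h⁻¹) * (z (m * h⁻¹) h : k)) • e m := by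
    conv_lhs => rw [← e.sum_repr x]
    rw [Finset.sum_mul]
    calc ∑ g : G, (e.repr x g • e g) * e h
        = ∑ g : G, (e.repr x g * (z g h : k)) • e (g * h) := by
          refine Finset.sum_congr rfl fun g _ => ?_
          rw [smul_mul_assoc, he, smul_smul]
      _ = ∑ m : G, (e.repr x (m * h⁻¹) * (z (m * h⁻¹) h : k)) • e m := by
          apply Fintype.sum_equiv (Equiv.mulRight h)
          intro g
          simp
  rw [hx]
  exact congrFun (e.repr_sum_self _) m

lemma tga_repr_mul_left (x : A) (h m : G) :
    e.repr (e h * x) m = e.repr x (h⁻¹ * m) * (z h (h⁻¹ * m) : k) := by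
  have hx : e h * x = ∑ m : G, (e.repr x (h⁻¹ * m) * (z h (h⁻¹ * m) : k)) • e m := by
    conv_lhs => rw [← e.sum_repr x]
    rw [Finset.mul_sum]
    calc ∑ g : G, e h * (e.repr x g • e g)
        = ∑ g : G, (e.repr x g * (z h g : k)) • e (h * g) := by
          refine Finset.sum_congr rfl fun g _ => ?_
          rw [mul_smul_comm, he, smul_smul, mul_comm]
      _ = ∑ m : G, (e.repr x (h⁻¹ * m) * (z h (h⁻¹ * m) : k)) • e m := by
          apply Fintype.sum_equiv (Equiv.mulLeft h)
          intro g
          simp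
  rw [hx]
  exact congrFun (e.repr_sum_self _) m

lemma tga_mem_center_iff (x : A) :
    x ∈ Subalgebra.center k A ↔
      ∀ g h : G, e.repr x g * (z g h : k)
        = e.repr x (h⁻¹ * g * h) * (z h (h⁻¹ * g * h) : k) := by
  constructor
  · intro hx g h
    have hc : e h * x = x * e h := Subalgebra.mem_center_iff.mp hx (e h)
    have := congrArg (fun y => e.repr y (g * h)) hc
    rw [tga_repr_mul_right z e he, tga_repr_mul_left z e he] at this
    rw [mul_inv_cancel_right] at this
    rw [← this, mul_assoc]
  · intro hx
    rw [Subalgebra.mem_center_iff]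
    have hbasis : ∀ h : G, e h * x = x * e h := by
      intro h
      rw [e.ext_elem_iff]
      intro m
      rw [tga_repr_mul_right z e he, tga_repr_mul_left z e he]
      have h2 := hx (m * h⁻¹) h
      have hgrp : h⁻¹ * (m * h⁻¹) * h = h⁻¹ * m := by group
      rw [hgrp] at h2
      exact h2.symm
    intro b
    calc b * x = (∑ h : G, e.repr b h • e h) * x := by rw [e.sum_repr]
      _ = ∑ h : G, e.repr b h • (e h * x) := by rw [Finset.sum_mul]; simp [smul_mul_assoc]
      _ = ∑ h : G, e.repr b h • (x * e h) := by simp only [hbasis]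
      _ = x * (∑ h : G, e.repr b h • e h) := by rw [Finset.mul_sum]; simp [mul_smul_comm]
      _ = x * b := by rw [e.sum_repr]

end TGA




/-- over an algebraically closed field of characteristic zero, the dimension
of the center of a twisted group algebra `k[G]_z` equals the number of `z`-regular
conjugacy classes of `G`. -/
theorem finrank_center_twisted_group_algebra
    {k G A : Type*} [Field k] [IsAlgClosed k] [CharZero k]
    [Group G] [Fintype G] [Ring A] [Algebra k A]
    (z : G → G → kˣ)
    (hz : ∀ g₁ g₂ g₃ : G, z g₂ g₃ * z g₁ (g₂ * g₃) = z (g₁ * g₂) g₃ * z g₁ g₂)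
    (hznorm : ∀ g : G, z g 1 = 1 ∧ z 1 g = 1)
    (e : Module.Basis G k A)
    (he : ∀ g g' : G, e g * e g' = (z g g' : k) • e (g * g')) :
    Module.finrank k (Subalgebra.center k A)
      = Nat.card {c : ConjClasses G //
          ∀ g ∈ ConjClasses.carrier c, ∀ h : G, h * g = g * h → z g h = z h g} := by
  classical
  have hout : ∀ c : ConjClasses G, ConjClasses.mk (Quotient.out c) = c := by
    intro c
    rw [← ConjClasses.quotient_mk_eq_mk]
    exact Quotient.out_eq c
  have hconj : ∀ g : G, ∃ s : G, s⁻¹ * Quotient.out (ConjClasses.mk g) * s = g := by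
    intro g
    have h1 : IsConj (Quotient.out (ConjClasses.mk g)) g := by
      rw [← ConjClasses.mk_eq_mk_iff_isConj, hout]
    obtain ⟨u, hu⟩ := isConj_iff.mp h1
    exact ⟨u⁻¹, by rw [inv_inv]; exact hu⟩
  choose t ht using hconj
  -- the linear map from the center to functions on z-regular classes
  let S := {c : ConjClasses G //
      ∀ g ∈ ConjClasses.carrier c, ∀ h : G, h * g = g * h → z g h = z h g}
  let Φ : Subalgebra.center k A →ₗ[k] (S → k) :=
    { toFun := fun x c => e.repr (x : A) (Quotient.out c.1)
      map_add' := fun x y => by ext c; simp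
      map_smul' := fun r x => by ext c; simp }
  have hΦapp : ∀ (x : Subalgebra.center k A) (c : S),
      Φ x c = e.repr (x : A) (Quotient.out c.1) := fun _ _ => rfl
  -- injectivity
  have hinj : Function.Injective Φ := by
    rw [injective_iff_map_eq_zero]
    intro x hx0
    have hcond := (tga_mem_center_iff z e he (x : A)).mp x.2
    have hprop : ∀ g g' : G, ConjClasses.mk g = ConjClasses.mk g' →
        e.repr (x : A) g = 0 → e.repr (x : A) g' = 0 := by
      intro g g' hm h0
      obtain ⟨u, hu⟩ := isConj_iff.mp (ConjClasses.mk_eq_mk_iff_isConj.mp hm)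
      have h2 := hcond g u⁻¹
      rw [inv_inv, hu, h0, zero_mul] at h2
      exact (mul_eq_zero.mp h2.symm).resolve_right (Units.ne_zero _)
    have hzero : ∀ g : G, e.repr (x : A) g = 0 := by
      intro g
      by_cases hreg : ∀ a ∈ ConjClasses.carrier (ConjClasses.mk g),
          ∀ s : G, s * a = a * s → z a s = z s a
      · have h0 : e.repr (x : A) (Quotient.out (ConjClasses.mk g)) = 0 := by
          have := congrFun hx0 (⟨ConjClasses.mk g, hreg⟩ : S)
          simpa [hΦapp] using this
        exact hprop _ g (hout _) h0
      · push_neg at hreg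
        obtain ⟨a, ha, s, hs, hzs⟩ := hreg
        have hma : ConjClasses.mk a = ConjClasses.mk g :=
          ConjClasses.mem_carrier_iff_mk_eq.mp ha
        have h0 : e.repr (x : A) a = 0 := by
          have h2 := hcond a s
          have hfix : s⁻¹ * a * s = a := by
            rw [mul_assoc, ← hs, ← mul_assoc, inv_mul_cancel, one_mul]
          rw [hfix] at h2
          by_contra hne
          exact hzs (Units.ext (mul_left_cancel₀ hne h2))
        exact hprop a g hma h0
    have hx1 : (x : A) = 0 := by
      rw [e.ext_elem_iff]
      intro i
      simp [hzero i]
    exact Subtype.ext hx1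
  -- surjectivity
  have hsurj : Function.Surjective Φ := by
    intro v
    set c : G → k := fun g =>
      if hreg : ∀ a ∈ ConjClasses.carrier (ConjClasses.mk g),
          ∀ s : G, s * a = a * s → z a s = z s a then
        v ⟨ConjClasses.mk g, hreg⟩ *
          ((z (Quotient.out (ConjClasses.mk g)) (t g) : k) * ((z (t g) g : k))⁻¹)
      else 0 with hcdef
    set x : A := e.equivFun.symm c with hxdef
    have hx : ∀ g : G, e.repr x g = c g := by
      intro g
      have h1 := congrFun (e.equivFun.apply_symm_apply c) g
      rwa [Module.Basis.equivFun_apply] at h1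
    have hxc : x ∈ Subalgebra.center k A := by
      rw [tga_mem_center_iff z e he]
      intro g h
      rw [hx, hx]
      have hclass : ConjClasses.mk (h⁻¹ * g * h) = ConjClasses.mk g := by
        rw [ConjClasses.mk_eq_mk_iff_isConj]
        exact isConj_iff.mpr ⟨h, by group⟩
      by_cases hreg : ∀ a ∈ ConjClasses.carrier (ConjClasses.mk g),
          ∀ s : G, s * a = a * s → z a s = z s a
      · have hreg' : ∀ a ∈ ConjClasses.carrier (ConjClasses.mk (h⁻¹ * g * h)),
            ∀ s : G, s * a = a * s → z a s = z s a := by rw [hclass]; exact hreg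
        rw [hcdef]
        simp only [dif_pos hreg, dif_pos hreg']
        have hv : v ⟨ConjClasses.mk (h⁻¹ * g * h), hreg'⟩ = v ⟨ConjClasses.mk g, hreg⟩ :=
          congrArg v (Subtype.ext hclass)
        have hout' : Quotient.out (ConjClasses.mk (h⁻¹ * g * h))
            = Quotient.out (ConjClasses.mk g) := by rw [hclass]
        rw [hv, hout']
        set r : G := Quotient.out (ConjClasses.mk g) with hrdef
        have hfac : ((z r (t g) : k) * ((z (t g) g : k))⁻¹) * (z g h : k)
            = ((z r (t (h⁻¹ * g * h)) : k) * ((z (t (h⁻¹ * g * h)) (h⁻¹ * g * h) : k))⁻¹)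
              * (z h (h⁻¹ * g * h) : k) := by
          have htrans := tga_F_transfer z hz r (t g) h g (h⁻¹ * g * h) (ht g).symm rfl
          have hwd := tga_F_welldef z hz r (t g * h) (t (h⁻¹ * g * h)) (h⁻¹ * g * h)
            (by
              rw [show (t g * h)⁻¹ * r * (t g * h)
                  = h⁻¹ * ((t g)⁻¹ * r * t g) * h from by group, hrdef, ht g])
            (by rw [hrdef, ← hclass]; exact (ht (h⁻¹ * g * h)).symm)
            (fun s hs => hreg' (h⁻¹ * g * h)
              (ConjClasses.mem_carrier_iff_mk_eq.mpr rfl) s hs)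
          rw [htrans, hwd]
        calc v ⟨ConjClasses.mk g, hreg⟩ *
              ((z r (t g) : k) * ((z (t g) g : k))⁻¹) * (z g h : k)
            = v ⟨ConjClasses.mk g, hreg⟩ *
              (((z r (t g) : k) * ((z (t g) g : k))⁻¹) * (z g h : k)) := by ring
          _ = v ⟨ConjClasses.mk g, hreg⟩ *
              (((z r (t (h⁻¹ * g * h)) : k) *
                ((z (t (h⁻¹ * g * h)) (h⁻¹ * g * h) : k))⁻¹) *
                (z h (h⁻¹ * g * h) : k)) := by rw [hfac]
          _ = v ⟨ConjClasses.mk g, hreg⟩ *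
              ((z r (t (h⁻¹ * g * h)) : k) *
                ((z (t (h⁻¹ * g * h)) (h⁻¹ * g * h) : k))⁻¹) *
                (z h (h⁻¹ * g * h) : k) := by ring
      · have hreg' : ¬ (∀ a ∈ ConjClasses.carrier (ConjClasses.mk (h⁻¹ * g * h)),
            ∀ s : G, s * a = a * s → z a s = z s a) := by rw [hclass]; exact hreg
        rw [hcdef]
        simp only [dif_neg hreg, dif_neg hreg', zero_mul]
    refine ⟨⟨x, hxc⟩, ?_⟩
    funext cl
    rw [hΦapp]
    set g₀ : G := Quotient.out cl.1 with hg₀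
    have hmk : ConjClasses.mk g₀ = cl.1 := hout cl.1
    have hreg : ∀ a ∈ ConjClasses.carrier (ConjClasses.mk g₀),
        ∀ s : G, s * a = a * s → z a s = z s a := by rw [hmk]; exact cl.2
    rw [hx, hcdef]
    simp only [dif_pos hreg]
    have hment : g₀ ∈ ConjClasses.carrier cl.1 :=
      ConjClasses.mem_carrier_iff_mk_eq.mpr hmk
    have hr : Quotient.out (ConjClasses.mk g₀) = g₀ := by rw [hmk]
    have hwd := tga_F_welldef z hz g₀ (t g₀) 1 g₀
      (by conv_lhs => rw [← ht g₀]; rw [hr])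
      (by group)
      (fun s hs => cl.2 g₀ hment s hs)
    rw [hr, hwd, (hznorm g₀).1, (hznorm g₀).2]
    simp only [Units.val_one, inv_one, mul_one, one_mul]
    exact congrArg v (Subtype.ext hmk)
  -- conclusion
  have equiv := LinearEquiv.ofBijective Φ ⟨hinj, hsurj⟩
  rw [equiv.finrank_eq]
  letI : Fintype S := Fintype.ofFinite S
  rw [Module.finrank_pi k, Nat.card_eq_fintype_card]
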